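/- Let P₁,…,P₈ be eight distinct points of ℙ³(ℂ) in general position (no three collinear, no five on a common hyperplane). Then the complex vector space of homogeneous polynomials of degree 2 in ℂ[x,y,z,w] vanishing at all eight points has dimension at least 2 and at most 3. -/
import Mathlib


open MvPolynomial
open scoped Classical

noncomputable section

/-- The projective line over `ℂ`. -/
abbrev P1C := Projectivization ℂ (Fin 2 → ℂ)
/-- The projective plane over `ℂ`. -/
abbrev P2C := Projectivization ℂ (Fin 3 → ℂ)
/-- Projective 3-space over `ℂ`. -/
abbrev P3C := Projectivization ℂ (Fin 4 → ℂ)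

/-- The quadratic form `δ = z² − 4xy` defining the conic `Δ`. -/
def δpoly : MvPolynomial (Fin 3) ℂ := X 2 ^ 2 - 4 * X 0 * X 1

/-- `P` is a singular point of the plane curve `{γ = 0}`. -/
def SingAt (γ : MvPolynomial (Fin 3) ℂ) (P : P2C) : Prop :=
  eval P.rep γ = 0 ∧ ∀ i : Fin 3, eval P.rep (pderiv i γ) = 0

/-- `P` is a node of the plane curve `{γ = 0}`. -/
def NodeAt (γ : MvPolynomial (Fin 3) ℂ) (P : P2C) : Prop :=
  SingAt γ P ∧
    (Matrix.of fun i j : Fin 3 => eval P.rep (pderiv i (pderiv j γ))).rank = 2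

/-- `{γ = 0}` is a nodal plane curve. -/
def NodalCurve (γ : MvPolynomial (Fin 3) ℂ) : Prop :=
  Squarefree γ ∧ ∀ P : P2C, SingAt γ P → NodeAt γ P

/-- Restriction of a ternary form to the conic `Δ`, via `(s:t) ↦ (s² : t² : 2st)`. -/
def restrictΔ (f : MvPolynomial (Fin 3) ℂ) : MvPolynomial (Fin 2) ℂ :=
  aeval (fun j => (![X 0 ^ 2, X 1 ^ 2, 2 * X 0 * X 1] : Fin 3 → MvPolynomial (Fin 2) ℂ) j) f

/-- `Δ` is a simple contact conic of the degree-`d` curve `{γ = 0}`. -/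
def SimpleContact (γ : MvPolynomial (Fin 3) ℂ) (d : ℕ) : Prop :=
  (∀ P : P2C, eval P.rep γ = 0 → eval P.rep δpoly = 0 → ¬ SingAt γ P) ∧
  ∃ (c : ℂ) (h : MvPolynomial (Fin 2) ℂ),
    c ≠ 0 ∧ Squarefree h ∧ h.IsHomogeneous d ∧ restrictΔ γ = C c * h ^ 2

/-- The covering map `ℙ¹×ℙ¹ → ℙ²` on representatives. -/
def πvec (a b : Fin 2 → ℂ) : Fin 3 → ℂ := ![a 0 * b 0, a 1 * b 1, a 0 * b 1 + a 1 * b 0]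

lemma vec2_eq_zero {x : Fin 2 → ℂ} (h0 : x 0 = 0) (h1 : x 1 = 0) : x = 0 := by
  ext i
  fin_cases i
  · simpa using h0
  · simpa using h1

lemma πvec_ne_zero {a b : Fin 2 → ℂ} (ha : a ≠ 0) (hb : b ≠ 0) : πvec a b ≠ 0 := by
  intro h
  have h0 : a 0 * b 0 = 0 := by simpa [πvec] using congrFun h 0
  have h1 : a 1 * b 1 = 0 := by simpa [πvec] using congrFun h 1
  have h2 : a 0 * b 1 + a 1 * b 0 = 0 := by simpa [πvec] using congrFun h 2
  by_cases ha0 : a 0 = 0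
  · have ha1 : a 1 ≠ 0 := fun h' => ha (vec2_eq_zero ha0 h')
    have hb1 : b 1 = 0 := by
      rcases mul_eq_zero.mp h1 with h' | h'
      · exact absurd h' ha1
      · exact h'
    have hb0 : b 0 = 0 := by
      have hz : a 1 * b 0 = 0 := by simpa [ha0, hb1] using h2
      rcases mul_eq_zero.mp hz with h' | h'
      · exact absurd h' ha1
      · exact h'
    exact hb (vec2_eq_zero hb0 hb1)
  · have hb0 : b 0 = 0 := by
      rcases mul_eq_zero.mp h0 with h' | h'
      · exact absurd h' ha0
      · exact h'
    have hb1 : b 1 = 0 := by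
      have hz : a 0 * b 1 = 0 := by simpa [hb0] using h2
      rcases mul_eq_zero.mp hz with h' | h'
      · exact absurd h' ha0
      · exact h'
    exact hb (vec2_eq_zero hb0 hb1)

/-- The double cover `π : ℙ¹×ℙ¹ → ℙ²` branched along `Δ`,
`π((s:t),(u:v)) = (su : tv : sv + tu)`. -/
def πΔ (Q : P1C × P1C) : P2C :=
  Projectivization.mk ℂ (πvec Q.1.rep Q.2.rep)
    (πvec_ne_zero Q.1.rep_nonzero Q.2.rep_nonzero)

/-- The weights giving the bigrading on `ℂ[s,t,u,v]`. -/
def biwt : Fin 4 → ℕ × ℕ := ![(1,0),(1,0),(0,1),(0,1)]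

/-- `p ∈ ℂ[s,t,u,v]` is bihomogeneous of bidegree `(a,b)`. -/
def Bihom (p : MvPolynomial (Fin 4) ℂ) (a b : ℕ) : Prop :=
  IsWeightedHomogeneous biwt p (a, b)

/-- The permutation of the variables `s,t,u,v` realizing the swap `(s,t) ↔ (u,v)`. -/
def swapPerm : Equiv.Perm (Fin 4) := (Equiv.swap 0 2).trans (Equiv.swap 1 3)

/-- `p(u,v,s,t)`, the polynomial `p` composed with the covering involution. -/
def swapPoly (p : MvPolynomial (Fin 4) ℂ) : MvPolynomial (Fin 4) ℂ :=
  rename swapPerm p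

/-- `γ(su, tv, sv + tu)`, the pull-back of a ternary form under `π`. -/
def pullΔ (γ : MvPolynomial (Fin 3) ℂ) : MvPolynomial (Fin 4) ℂ :=
  aeval (fun j => (![X 0 * X 2, X 1 * X 3, X 0 * X 3 + X 1 * X 2] :
    Fin 3 → MvPolynomial (Fin 4) ℂ) j) γ

/-- `γ` splits with type `(m,n)` with respect to `Δ`. -/
def SplitsType (γ : MvPolynomial (Fin 3) ℂ) (m n : ℕ) : Prop :=
  ∃ dp : MvPolynomial (Fin 4) ℂ,
    dp ≠ 0 ∧ Bihom dp m n ∧ pullΔ γ = dp * swapPoly dp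

/-- `{l = 0}` is a line tangent to `Δ`:
up to a nonzero scalar, `l = b²x + a²y − ab·z` with `(a,b) ≠ (0,0)`. -/
def TangentToΔ (l : MvPolynomial (Fin 3) ℂ) : Prop :=
  ∃ c a b : ℂ, c ≠ 0 ∧ (a ≠ 0 ∨ b ≠ 0) ∧
    l = C c * (C (b ^ 2) * X 0 + C (a ^ 2) * X 1 - C (a * b) * X 2)

/-- The line `{l = 0}` is transversal to `{γ = 0}`: for a linear parameterization
of the line, the restricted binary form is squarefree. -/
def TransversalTo (γ l : MvPolynomial (Fin 3) ℂ) : Prop :=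
  ∃ p q : Fin 3 → ℂ, LinearIndependent ℂ ![p, q] ∧ eval p l = 0 ∧ eval q l = 0 ∧
    Squarefree (aeval (fun j => (fun j => C (p j) * X 0 + C (q j) * X 1 :
      Fin 3 → MvPolynomial (Fin 2) ℂ) j) γ)

/-- The representative in `ℂ⁴` of a point of `ℙ¹×ℙ¹`. -/
def pairRep (Q : P1C × P1C) : Fin 4 → ℂ :=
  ![Q.1.rep 0, Q.1.rep 1, Q.2.rep 0, Q.2.rep 1]

/-- Evaluation of `p ∈ ℂ[s,t,u,v]` at (a representative of) a point of `ℙ¹×ℙ¹`. -/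
def evalPair (p : MvPolynomial (Fin 4) ℂ) (Q : P1C × P1C) : ℂ := eval (pairRep Q) p

/-- `Z = {Q ∈ ℙ¹×ℙ¹ : d⁺(Q) = 0 and d⁺(σ(Q)) = 0}`. -/
def Zset (dp : MvPolynomial (Fin 4) ℂ) : Set (P1C × P1C) :=
  {Q | evalPair dp Q = 0 ∧ evalPair dp Q.swap = 0}

/-- Evaluation at a vector, as a linear map. -/
def evalLin {k : ℕ} (v : Fin k → ℂ) : MvPolynomial (Fin k) ℂ →ₗ[ℂ] ℂ :=
  (aeval v).toLinearMap

/-- The space of degree-`d` forms in `k` variables vanishing on a set `S` of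
projective points. -/
def homVanish (k d : ℕ) (S : Set (Projectivization ℂ (Fin k → ℂ))) :
    Submodule ℂ (MvPolynomial (Fin k) ℂ) :=
  homogeneousSubmodule (Fin k) ℂ d ⊓ ⨅ P ∈ S, LinearMap.ker (evalLin P.rep)

/-- The space of bidegree-`(a,b)` forms vanishing on a set `S ⊆ ℙ¹×ℙ¹`. -/
def biVanish (a b : ℕ) (S : Set (P1C × P1C)) : Submodule ℂ (MvPolynomial (Fin 4) ℂ) :=
  weightedHomogeneousSubmodule ℂ biwt (a, b) ⊓ ⨅ Q ∈ S, LinearMap.ker (evalLin (pairRep Q))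

/-- `r` points of `ℙ¹×ℙ¹` are in general position. -/
def GenPosP1P1 {r : ℕ} (P : Fin r → P1C × P1C) : Prop :=
  Function.Injective P ∧
  (∀ Q : P1C, {i : Fin r | (P i).1 = Q}.ncard ≤ 2) ∧
  (∀ Q : P1C, {i : Fin r | (P i).2 = Q}.ncard ≤ 2) ∧
  ∀ p : MvPolynomial (Fin 4) ℂ, p ≠ 0 → Bihom p 1 1 →
    ∀ S : Finset (Fin r), S.card = 5 → ¬ ∀ i ∈ S, evalPair p (P i) = 0

/-- `P` is a singular point of the surface `{F = 0} ⊆ ℙ³`. -/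
def SingAt4 (F : MvPolynomial (Fin 4) ℂ) (P : P3C) : Prop :=
  eval P.rep F = 0 ∧ ∀ i : Fin 4, eval P.rep (pderiv i F) = 0

/-- `P` is a node of the surface `{F = 0} ⊆ ℙ³`. -/
def NodeAt4 (F : MvPolynomial (Fin 4) ℂ) (P : P3C) : Prop :=
  SingAt4 F P ∧
    (Matrix.of fun i j : Fin 4 => eval P.rep (pderiv i (pderiv j F))).rank = 3

/-- `{F = 0}` is a nodal quartic surface in `ℙ³`. -/
def NodalQuartic (F : MvPolynomial (Fin 4) ℂ) : Prop :=
  F.IsHomogeneous 4 ∧ Squarefree F ∧ ∀ P : P3C, SingAt4 F P → NodeAt4 F P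

/-- `r` points of `ℙ³` are in general position: no three collinear, no five on a
common hyperplane. -/
def GenPosP3 {r : ℕ} (P : Fin r → P3C) : Prop :=
  Function.Injective P ∧
  (∀ i j k : Fin r, i ≠ j → i ≠ k → j ≠ k →
    LinearIndependent ℂ ![(P i).rep, (P j).rep, (P k).rep]) ∧
  ∀ φ : (Fin 4 → ℂ) →ₗ[ℂ] ℂ, φ ≠ 0 →
    ∀ S : Finset (Fin r), S.card = 5 → ¬ ∀ i ∈ S, φ (P i).rep = 0

/-- The inclusion `ℂ[x,y,z] → ℂ[x,y,z,w]`. -/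
def liftP (f : MvPolynomial (Fin 3) ℂ) : MvPolynomial (Fin 4) ℂ :=
  rename Fin.castSucc f

lemma e3_ne_zero : (![0,0,0,1] : Fin 4 → ℂ) ≠ 0 := by
  intro h
  simpa using congrFun h 3

/-- The point `P₀ = (0:0:0:1) ∈ ℙ³`. -/
def P0 : P3C := Projectivization.mk ℂ ![0,0,0,1] e3_ne_zero

/-- The surface `{F = 0}` contains no projective line through `P`. -/
def NoLineThrough (F : MvPolynomial (Fin 4) ℂ) (P : P3C) : Prop :=
  ¬ ∃ v : Fin 4 → ℂ, LinearIndependent ℂ ![P.rep, v] ∧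
      ∀ a b : ℂ, eval (a • P.rep + b • v) F = 0

/-- Forget the last coordinate of (a representative of) a point of `ℙ³`. -/
def dropW (Q : P3C) : Fin 3 → ℂ := fun j => Q.rep j.castSucc

lemma e100_ne_zero : (![1,0,0] : Fin 3 → ℂ) ≠ 0 := by
  intro h
  simpa using congrFun h 0

/-- The projection `ℙ³ ∖ {(0:0:0:1)} → ℙ²`, `(x:y:z:w) ↦ (x:y:z)`
(with junk value at `(0:0:0:1)`). -/
def projP0 (Q : P3C) : P2C :=
  if h : dropW Q ≠ 0 then Projectivization.mk ℂ (dropW Q) h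
  else Projectivization.mk ℂ ![1,0,0] e100_ne_zero

end
noncomputable section AuxQuadrics

open MvPolynomial Module
open scoped Classical

private def D2aux : Finset (Fin 4 →₀ ℕ) :=
  (Finset.Nat.antidiagonalTuple 4 2).map Finsupp.equivFunOnFinite.symm.toEmbedding

private lemma degree_eq_sum_aux (d : Fin 4 →₀ ℕ) : d.degree = ∑ i : Fin 4, d i := by
  rw [Finsupp.degree]
  exact Finset.sum_subset (Finset.subset_univ _) (by
    intro x _ hx
    exact Finsupp.notMem_support_iff.mp hx)

private lemma hset_aux : {d : Fin 4 →₀ ℕ | d.degree = 2} = ↑D2aux := by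
  ext d
  simp only [Set.mem_setOf_eq, D2aux, Finset.coe_map, Set.mem_image, Finset.mem_coe,
    Finset.Nat.mem_antidiagonalTuple, Equiv.coe_toEmbedding]
  constructor
  · intro h
    exact ⟨Finsupp.equivFunOnFinite d, by
      rw [show (∑ i : Fin 4, Finsupp.equivFunOnFinite d i) = d.degree from
        (degree_eq_sum_aux d).symm]; exact h, by simp⟩
  · rintro ⟨x, hx, rfl⟩
    rw [degree_eq_sum_aux]
    simpa using hx

private lemma homSub_eq_aux :
    homogeneousSubmodule (Fin 4) ℂ 2 = restrictSupport ℂ (↑D2aux : Set (Fin 4 →₀ ℕ)) := by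
  rw [homogeneousSubmodule_eq_finsupp_supported, ← hset_aux]; rfl

private lemma finrank_V_aux : Module.finrank ℂ ↥(homogeneousSubmodule (Fin 4) ℂ 2) = 10 := by
  rw [homSub_eq_aux]
  rw [Module.finrank_eq_card_basis (basisRestrictSupport ℂ (↑D2aux : Set (Fin 4 →₀ ℕ)))]
  rw [← Nat.card_eq_fintype_card, Nat.card_coe_set_eq, Set.ncard_coe_finset]
  simp [D2aux]
  decide

private instance fd_V_aux : FiniteDimensional ℂ ↥(homogeneousSubmodule (Fin 4) ℂ 2) := by
  rw [homSub_eq_aux]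
  exact Module.Finite.of_basis (basisRestrictSupport ℂ (↑D2aux : Set (Fin 4 →₀ ℕ)))

variable {P : Fin 8 → P3C}

private lemma span_le_of_bad (hgen : GenPosP3 P) {i a b c : Fin 8} (hia : i ≠ a) (hib : i ≠ b)
    (hab : a ≠ b)
    (h : (P i).rep ∈ Submodule.span ℂ {(P a).rep, (P b).rep, (P c).rep}) :
    (P c).rep ∈ Submodule.span ℂ {(P i).rep, (P a).rep, (P b).rep} := by
  rw [Submodule.mem_span_insert] at h
  obtain ⟨α, z, hz, hiz⟩ := h
  rw [Submodule.mem_span_insert] at hz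
  obtain ⟨β, w, hw, hzw⟩ := hz
  rw [Submodule.mem_span_singleton] at hw
  obtain ⟨γ, rfl⟩ := hw
  subst hzw
  by_cases hγ : γ = 0
  · exfalso
    have hli := Fintype.linearIndependent_iff.mp (hgen.2.1 i a b hia hib hab)
    have heq : (P i).rep = α • (P a).rep + β • (P b).rep := by simpa [hγ] using hiz
    have h0 := hli ![1, -α, -β] (by
      simp only [Fin.sum_univ_three, Matrix.cons_val_zero, Matrix.cons_val_one, Matrix.head_cons,
        Matrix.cons_val_two, Matrix.tail_cons, one_smul, neg_smul]
      rw [heq]; abel) 0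
    simp at h0
  · have habel : (α • (P a).rep + (β • (P b).rep + γ • (P c).rep)) - α • (P a).rep - β • (P b).rep
        = γ • (P c).rep := by abel
    have hc : (P c).rep = γ⁻¹ • ((P i).rep - α • (P a).rep - β • (P b).rep) := by
      rw [hiz, habel, smul_smul, inv_mul_cancel₀ hγ, one_smul]
    rw [hc]
    exact Submodule.smul_mem _ _ (Submodule.sub_mem _ (Submodule.sub_mem _
      (Submodule.subset_span (by simp)) (Submodule.smul_mem _ _ (Submodule.subset_span (by simp))))
      (Submodule.smul_mem _ _ (Submodule.subset_span (by simp))))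

private lemma two_bad (hgen : GenPosP3 P) {i a b c d : Fin 8}
    (hia : i ≠ a) (hib : i ≠ b) (hic : i ≠ c) (hid : i ≠ d)
    (hab : a ≠ b) (hac : a ≠ c) (had : a ≠ d) (hbc : b ≠ c) (hbd : b ≠ d) (hcd : c ≠ d)
    (h1 : (P i).rep ∈ Submodule.span ℂ {(P a).rep, (P b).rep, (P c).rep})
    (h2 : (P i).rep ∈ Submodule.span ℂ {(P a).rep, (P b).rep, (P d).rep}) : False := by
  set W := Submodule.span ℂ ({(P i).rep, (P a).rep, (P b).rep} : Set (Fin 4 → ℂ)) with hWdef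
  have hcW : (P c).rep ∈ W := span_le_of_bad hgen hia hib hab h1
  have hdW : (P d).rep ∈ W := span_le_of_bad hgen hia hib hab h2
  have hWne : W ≠ ⊤ := by
    intro htop
    have hle : Module.finrank ℂ ↥W ≤ 3 := by
      refine le_trans (finrank_span_le_card _) ?_
      rw [Set.toFinset_insert, Set.toFinset_insert, Set.toFinset_singleton]
      exact le_trans (Finset.card_insert_le _ _) (Nat.succ_le_succ (le_trans
        (Finset.card_insert_le _ _) (by simp)))
    rw [htop] at hle
    rw [finrank_top] at hle
    simp [Module.finrank_fin_fun] at hle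
  obtain ⟨φ, hφ0, hφ⟩ := Submodule.exists_dual_map_eq_bot_of_lt_top
    (lt_top_iff_ne_top.mpr hWne) inferInstance
  have hv : ∀ x ∈ W, φ x = 0 := by
    intro x hx
    have : φ x ∈ W.map φ := Submodule.mem_map_of_mem hx
    rw [hφ] at this
    simpa using this
  have hcard : ({i, a, b, c, d} : Finset (Fin 8)).card = 5 := by
    rw [Finset.card_insert_of_notMem (by simp [hia, hib, hic, hid]),
      Finset.card_insert_of_notMem (by simp [hab, hac, had]),
      Finset.card_insert_of_notMem (by simp [hbc, hbd]),
      Finset.card_insert_of_notMem (by simp [hcd]), Finset.card_singleton]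
  refine hgen.2.2 φ hφ0 {i, a, b, c, d} hcard ?_
  intro j hj
  simp only [Finset.mem_insert, Finset.mem_singleton] at hj
  rcases hj with rfl | rfl | rfl | rfl | rfl
  · exact hv _ (Submodule.subset_span (by simp))
  · exact hv _ (Submodule.subset_span (by simp))
  · exact hv _ (Submodule.subset_span (by simp))
  · exact hv _ hcW
  · exact hv _ hdW

private def linPoly (φ : (Fin 4 → ℂ) →ₗ[ℂ] ℂ) : MvPolynomial (Fin 4) ℂ :=
  ∑ i, C (φ fun j => if i = j then 1 else 0) * X i

private lemma eval_linPoly (φ : (Fin 4 → ℂ) →ₗ[ℂ] ℂ) (v : Fin 4 → ℂ) :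
    eval v (linPoly φ) = φ v := by
  rw [LinearMap.pi_apply_eq_sum_univ φ v, linPoly]
  simp [mul_comm]

private lemma linPoly_hom (φ : (Fin 4 → ℂ) →ₗ[ℂ] ℂ) : (linPoly φ).IsHomogeneous 1 := by
  apply IsHomogeneous.sum
  intro i _
  simpa using (isHomogeneous_C (Fin 4) (φ fun j => if i = j then 1 else 0)).mul
    (isHomogeneous_X ℂ i)

private lemma good_triple {i a b c : Fin 8}
    (h : (P i).rep ∉ Submodule.span ℂ {(P a).rep, (P b).rep, (P c).rep}) :
    ∃ φ : (Fin 4 → ℂ) →ₗ[ℂ] ℂ, φ (P i).rep ≠ 0 ∧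
      φ (P a).rep = 0 ∧ φ (P b).rep = 0 ∧ φ (P c).rep = 0 := by
  obtain ⟨φ, hφi, hφ⟩ := Submodule.exists_dual_map_eq_bot_of_notMem h inferInstance
  have hv : ∀ x ∈ Submodule.span ℂ ({(P a).rep, (P b).rep, (P c).rep} : Set (Fin 4 → ℂ)),
      φ x = 0 := by
    intro x hx
    have : φ x ∈ Submodule.map φ (Submodule.span ℂ {(P a).rep, (P b).rep, (P c).rep}) :=
      Submodule.mem_map_of_mem hx
    rw [hφ] at this
    simpa using this
  exact ⟨φ, hφi, hv _ (Submodule.subset_span (by simp)),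
    hv _ (Submodule.subset_span (by simp)), hv _ (Submodule.subset_span (by simp))⟩

private lemma sep (hgen : GenPosP3 P) (o : Fin 7 → Fin 8) (ho : Function.Injective o) :
    ∃ q : MvPolynomial (Fin 4) ℂ, q.IsHomogeneous 2 ∧ eval (P (o 0)).rep q ≠ 0 ∧
      ∀ j : Fin 7, j ≠ 0 → eval (P (o j)).rep q = 0 := by
  have hne : ∀ p q : Fin 7, p ≠ q → o p ≠ o q := fun p q h hpq => h (ho hpq)
  set Bd : Fin 7 → Fin 7 → Fin 7 → Prop := fun x y z =>
    (P (o 0)).rep ∈ Submodule.span ℂ {(P (o x)).rep, (P (o y)).rep, (P (o z)).rep} with hBd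
  have rot : ∀ x y z : Fin 4 → ℂ, ({x, y, z} : Set (Fin 4 → ℂ)) = {y, z, x} := by
    intro x y z; ext t; simp; tauto
  have swap23 : ∀ x y z : Fin 4 → ℂ, ({x, y, z} : Set (Fin 4 → ℂ)) = {x, z, y} := by
    intro x y z; ext t; simp; tauto
  have h8 : ¬((Bd 1 2 3 ∨ Bd 4 5 6) ∧ (Bd 1 4 5 ∨ Bd 2 3 6) ∧ (Bd 1 2 6 ∨ Bd 3 4 5)) := by
    rintro ⟨hAB, hCD, hEF⟩
    rcases hAB with hA | hB <;> rcases hCD with hC | hD <;> rcases hEF with hE | hF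
    · exact two_bad hgen (hne 0 1 (by decide)) (hne 0 2 (by decide)) (hne 0 3 (by decide))
        (hne 0 6 (by decide)) (hne 1 2 (by decide)) (hne 1 3 (by decide)) (hne 1 6 (by decide))
        (hne 2 3 (by decide)) (hne 2 6 (by decide)) (hne 3 6 (by decide)) hA hE
    · rw [hBd] at hC hF
      rw [rot] at hC hF
      exact two_bad hgen (hne 0 4 (by decide)) (hne 0 5 (by decide)) (hne 0 1 (by decide))
        (hne 0 3 (by decide)) (hne 4 5 (by decide)) (hne 4 1 (by decide)) (hne 4 3 (by decide))
        (hne 5 1 (by decide)) (hne 5 3 (by decide)) (hne 1 3 (by decide)) hC hF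
    · rw [hBd] at hA hD
      rw [rot] at hA
      exact two_bad hgen (hne 0 2 (by decide)) (hne 0 3 (by decide)) (hne 0 1 (by decide))
        (hne 0 6 (by decide)) (hne 2 3 (by decide)) (hne 2 1 (by decide)) (hne 2 6 (by decide))
        (hne 3 1 (by decide)) (hne 3 6 (by decide)) (hne 1 6 (by decide)) hA hD
    · rw [hBd] at hA hD
      rw [rot] at hA
      exact two_bad hgen (hne 0 2 (by decide)) (hne 0 3 (by decide)) (hne 0 1 (by decide))
        (hne 0 6 (by decide)) (hne 2 3 (by decide)) (hne 2 1 (by decide)) (hne 2 6 (by decide))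
        (hne 3 1 (by decide)) (hne 3 6 (by decide)) (hne 1 6 (by decide)) hA hD
    · rw [hBd] at hB hC
      rw [rot] at hC
      exact two_bad hgen (hne 0 4 (by decide)) (hne 0 5 (by decide)) (hne 0 6 (by decide))
        (hne 0 1 (by decide)) (hne 4 5 (by decide)) (hne 4 6 (by decide)) (hne 4 1 (by decide))
        (hne 5 6 (by decide)) (hne 5 1 (by decide)) (hne 6 1 (by decide)) hB hC
    · rw [hBd] at hB hC
      rw [rot] at hC
      exact two_bad hgen (hne 0 4 (by decide)) (hne 0 5 (by decide)) (hne 0 6 (by decide))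
        (hne 0 1 (by decide)) (hne 4 5 (by decide)) (hne 4 6 (by decide)) (hne 4 1 (by decide))
        (hne 5 6 (by decide)) (hne 5 1 (by decide)) (hne 6 1 (by decide)) hB hC
    · rw [hBd] at hD hE
      rw [swap23] at hD
      rw [rot] at hE
      exact two_bad hgen (hne 0 2 (by decide)) (hne 0 6 (by decide)) (hne 0 3 (by decide))
        (hne 0 1 (by decide)) (hne 2 6 (by decide)) (hne 2 3 (by decide)) (hne 2 1 (by decide))
        (hne 6 3 (by decide)) (hne 6 1 (by decide)) (hne 3 1 (by decide)) hD hE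
    · rw [hBd] at hB hF
      rw [rot] at hF
      exact two_bad hgen (hne 0 4 (by decide)) (hne 0 5 (by decide)) (hne 0 6 (by decide))
        (hne 0 3 (by decide)) (hne 4 5 (by decide)) (hne 4 6 (by decide)) (hne 4 3 (by decide))
        (hne 5 6 (by decide)) (hne 5 3 (by decide)) (hne 6 3 (by decide)) hB hF
  have hgood : (¬ Bd 1 2 3 ∧ ¬ Bd 4 5 6) ∨ (¬ Bd 1 4 5 ∧ ¬ Bd 2 3 6) ∨
      (¬ Bd 1 2 6 ∧ ¬ Bd 3 4 5) := by tauto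
  have key : ∀ x1 x2 x3 y1 y2 y3 : Fin 7,
      (∀ j : Fin 7, j ≠ 0 → j = x1 ∨ j = x2 ∨ j = x3 ∨ j = y1 ∨ j = y2 ∨ j = y3) →
      ¬ Bd x1 x2 x3 → ¬ Bd y1 y2 y3 →
      ∃ q : MvPolynomial (Fin 4) ℂ, q.IsHomogeneous 2 ∧ eval (P (o 0)).rep q ≠ 0 ∧
        ∀ j : Fin 7, j ≠ 0 → eval (P (o j)).rep q = 0 := by
    intro x1 x2 x3 y1 y2 y3 hcov hg1 hg2
    obtain ⟨φ, hφ0, hφ1, hφ2, hφ3⟩ := good_triple hg1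
    obtain ⟨ψ, hψ0, hψ1, hψ2, hψ3⟩ := good_triple hg2
    refine ⟨linPoly φ * linPoly ψ, (by simpa using (linPoly_hom φ).mul (linPoly_hom ψ)), ?_, ?_⟩
    · rw [eval_mul, eval_linPoly, eval_linPoly]
      exact mul_ne_zero hφ0 hψ0
    · intro j hj
      rw [eval_mul, eval_linPoly, eval_linPoly]
      rcases hcov j hj with rfl | rfl | rfl | rfl | rfl | rfl
      · rw [hφ1, zero_mul]
      · rw [hφ2, zero_mul]
      · rw [hφ3, zero_mul]
      · rw [hψ1, mul_zero]
      · rw [hψ2, mul_zero]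
      · rw [hψ3, mul_zero]
  rcases hgood with ⟨h1, h2⟩ | ⟨h1, h2⟩ | ⟨h1, h2⟩
  · exact key 1 2 3 4 5 6 (by decide) h1 h2
  · exact key 1 4 5 2 3 6 (by decide) h1 h2
  · exact key 1 2 6 3 4 5 (by decide) h1 h2

private lemma evalLin_apply (v : Fin 4 → ℂ) (p : MvPolynomial (Fin 4) ℂ) :
    evalLin v p = eval v p :=
  DFunLike.congr_fun (coe_aeval_eq_eval v) p

end AuxQuadrics
set_option synthInstance.maxHeartbeats 1000000
set_option maxHeartbeats 1000000

theorem dim_quadrics_through_eight_points (P : Fin 8 → P3C) (hgen : GenPosP3 P) :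
    2 ≤ Module.finrank ℂ ↥(homVanish 4 2 (Set.range P)) ∧
    Module.finrank ℂ ↥(homVanish 4 2 (Set.range P)) ≤ 3 := by
  classical
  set V := homogeneousSubmodule (Fin 4) ℂ 2 with hV
  have hmem : ∀ p : MvPolynomial (Fin 4) ℂ,
      p ∈ homVanish 4 2 (Set.range P) ↔ p ∈ V ∧ ∀ i : Fin 8, eval (P i).rep p = 0 := by
    intro p
    simp only [homVanish, Submodule.mem_inf, Submodule.mem_iInf, LinearMap.mem_ker]
    constructor
    · rintro ⟨h1, h2⟩
      exact ⟨h1, fun i => by rw [← evalLin_apply]; exact h2 (P i) ⟨i, rfl⟩⟩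
    · rintro ⟨h1, h2⟩
      refine ⟨h1, ?_⟩
      rintro Q ⟨i, rfl⟩
      rw [evalLin_apply]
      exact h2 i
  have hle : homVanish 4 2 (Set.range P) ≤ V := fun p hp => ((hmem p).mp hp).1
  have h10 : Module.finrank ℂ ↥V = 10 := finrank_V_aux
  constructor
  · set Φ : ↥V →ₗ[ℂ] (Fin 8 → ℂ) :=
      LinearMap.pi (fun i => (evalLin (P i).rep).comp V.subtype) with hΦ
    have hker : Submodule.comap V.subtype (homVanish 4 2 (Set.range P)) = LinearMap.ker Φ := by
      ext ⟨p, hp⟩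
      simp only [Submodule.mem_comap, Submodule.coe_subtype, LinearMap.mem_ker]
      rw [hmem]
      constructor
      · rintro ⟨-, h2⟩
        funext i
        simp only [hΦ, LinearMap.pi_apply, LinearMap.comp_apply, Pi.zero_apply]
        rw [Submodule.coe_subtype, evalLin_apply]
        exact h2 i
      · intro h
        refine ⟨hp, fun i => ?_⟩
        have := congrFun h i
        simp only [hΦ, LinearMap.pi_apply, LinearMap.comp_apply, Pi.zero_apply] at this
        rw [Submodule.coe_subtype, evalLin_apply] at this
        exact this
    have hfr : Module.finrank ℂ ↥(homVanish 4 2 (Set.range P)) =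
        Module.finrank ℂ ↥(LinearMap.ker Φ) := by
      have hcomap : Module.finrank ℂ ↥(Submodule.comap V.subtype (homVanish 4 2 (Set.range P)))
          = Module.finrank ℂ ↥(homVanish 4 2 (Set.range P)) :=
        (Submodule.comapSubtypeEquivOfLe hle).finrank_eq
      rw [hker] at hcomap
      exact hcomap.symm
    have hrn := Φ.finrank_range_add_finrank_ker
    have hrange : Module.finrank ℂ ↥(LinearMap.range Φ) ≤ 8 :=
      le_trans (Submodule.finrank_le _) (by simp [Module.finrank_fin_fun])
    rw [hfr]
    omega
  · set Ψ : ↥V →ₗ[ℂ] (Fin 7 → ℂ) :=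
      LinearMap.pi (fun k => (evalLin (P k.castSucc).rep).comp V.subtype) with hΨ
    have hsurj : LinearMap.range Ψ = ⊤ := by
      rw [← top_le_iff, ← (Pi.basisFun ℂ (Fin 7)).span_eq, Submodule.span_le]
      rintro _ ⟨k, rfl⟩
      have hoinj : Function.Injective (fun j : Fin 7 => (k + j).castSucc) := by
        intro j1 j2 h
        exact add_left_cancel (Fin.castSucc_inj.mp h)
      obtain ⟨q, hqh, hq0, hqz⟩ := sep hgen _ hoinj
      simp only [add_zero] at hq0
      have heq : (Pi.basisFun ℂ (Fin 7)) k =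
          (eval (P k.castSucc).rep q)⁻¹ • Ψ ⟨q, hqh⟩ := by
        funext m
        simp only [Pi.basisFun_apply, hΨ, LinearMap.pi_apply, LinearMap.comp_apply,
          Pi.smul_apply, smul_eq_mul]
        rw [Submodule.coe_subtype, evalLin_apply]
        by_cases hm : m = k
        · subst hm
          rw [Pi.single_eq_same, inv_mul_cancel₀ hq0]
        · rw [Pi.single_eq_of_ne hm]
          have hmk : m - k ≠ 0 := sub_ne_zero.mpr hm
          have hz := hqz (m - k) hmk
          have : k + (m - k) = m := by
            rw [add_comm, sub_add_cancel]
          rw [this] at hz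
          rw [hz, mul_zero]
      rw [heq]
      exact Submodule.smul_mem _ _ (LinearMap.mem_range_self _ _)
    have hrn := Ψ.finrank_range_add_finrank_ker
    rw [hsurj, finrank_top] at hrn
    have h7 : Module.finrank ℂ (Fin 7 → ℂ) = 7 := by simp [Module.finrank_fin_fun]
    have hle2 : Submodule.comap V.subtype (homVanish 4 2 (Set.range P)) ≤ LinearMap.ker Ψ := by
      rintro ⟨p, hp⟩ hmem'
      simp only [Submodule.mem_comap, Submodule.coe_subtype] at hmem'
      have h2 := ((hmem p).mp hmem').2
      rw [LinearMap.mem_ker]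
      funext m
      simp only [hΨ, LinearMap.pi_apply, LinearMap.comp_apply, Pi.zero_apply]
      rw [Submodule.coe_subtype, evalLin_apply]
      exact h2 m.castSucc
    have hfr2 : Module.finrank ℂ ↥(homVanish 4 2 (Set.range P)) ≤
        Module.finrank ℂ ↥(LinearMap.ker Ψ) := by
      have hcomap : Module.finrank ℂ ↥(Submodule.comap V.subtype (homVanish 4 2 (Set.range P)))
          = Module.finrank ℂ ↥(homVanish 4 2 (Set.range P)) :=
        (Submodule.comapSubtypeEquivOfLe hle).finrank_eq
      rw [← hcomap]
      exact Submodule.finrank_mono hle2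
    omega
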